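/- Let h : [0,1] → ℝ₊ be non-decreasing, right-continuous with h(0) = 0 and ∫₀¹ h(s) ds = 1, and let Z ∈ L¹ be such that s ↦ VaR_s(Z)h(s) is integrable on (0,1). Then the spectral risk measure ρ_h(Z) = ∫₀¹ VaR_s(Z)h(s) ds admits the representation ρ_h(Z) = ∫₀¹ (1−s)·ES_s(Z) dh(s), where the right-hand side is a Riemann–Stieltjes integral with respect to h. -/

import Mathlib

open MeasureTheory

/-- Value-at-Risk at level `s` of the loss `Z` under the probability measure `μ`. -/
noncomputable def VaR {Ω : Type*} [MeasurableSpace Ω] (μ : Measure Ω)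
    (Z : Ω → ℝ) (s : ℝ) : ℝ :=
  sInf {z : ℝ | s ≤ (μ {ω | Z ω ≤ z}).toReal}

/-- Expected Shortfall at level `s` of the loss `Z` under `μ`. -/
noncomputable def ES {Ω : Type*} [MeasurableSpace Ω] (μ : Measure Ω)
    (Z : Ω → ℝ) (s : ℝ) : ℝ :=
  (1 - s)⁻¹ * ∫ u in Set.Ioc s 1, VaR μ Z u

/-- A spectral risk measure `ρ_h(Z) = ∫₀¹ VaR_s(Z) h(s) ds` can be written as a
Riemann–Stieltjes integral of `(1-s) ES_s(Z)` against the distortion function `h`. -/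
theorem spectral_as_stieltjes {Ω : Type*} [MeasurableSpace Ω] (μ : Measure Ω)
    [IsProbabilityMeasure μ] (Z : Ω → ℝ) (hZ : Integrable Z μ)
    (h : StieltjesFunction ℝ)
    (h_nonneg : ∀ s ∈ Set.Icc (0 : ℝ) 1, 0 ≤ h s)
    (h_zero : h 0 = 0)
    (h_one : ∫ s in Set.Ioo (0 : ℝ) 1, h s = 1)
    (h_int : IntegrableOn (fun s => VaR μ Z s * h s) (Set.Ioo (0 : ℝ) 1)) :
    ∫ s in Set.Ioo (0 : ℝ) 1, VaR μ Z s * h s =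
      ∫ s in Set.Ioo (0 : ℝ) 1, (1 - s) * ES μ Z s ∂h.measure := by
  classical
  set g : ℝ → ℝ := VaR μ Z with hg_def
  -- measurable representative of Z
  obtain ⟨Z', hZ'm, hZZ'⟩ := hZ.1.aemeasurable
  have hFeq : ∀ z : ℝ, μ {ω | Z ω ≤ z} = μ {ω | Z' ω ≤ z} := by
    intro z
    apply measure_congr
    filter_upwards [hZZ'] with ω hω
    change (Z ω ≤ z) = (Z' ω ≤ z)
    rw [hω]
  -- monotonicity of VaR on (0,1)
  have hmono : MonotoneOn g (Set.Ioo (0:ℝ) 1) := by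
    intro s hs t ht hst
    have hsub : {z : ℝ | t ≤ (μ {ω | Z ω ≤ z}).toReal}
        ⊆ {z : ℝ | s ≤ (μ {ω | Z ω ≤ z}).toReal} :=
      fun z hz => le_trans hst hz
    -- bounded below
    have hbdd : BddBelow {z : ℝ | s ≤ (μ {ω | Z ω ≤ z}).toReal} := by
      have htend : Filter.Tendsto (fun n : ℕ => μ {ω | Z' ω ≤ -(n:ℝ)})
          Filter.atTop (nhds (μ (⋂ n : ℕ, {ω | Z' ω ≤ -(n:ℝ)}))) := by
        apply tendsto_measure_iInter_atTop
        · exact fun n => (hZ'm measurableSet_Iic).nullMeasurableSet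
        · intro m n hmn ω hω
          simp only [Set.mem_setOf_eq] at hω ⊢
          have : -(n:ℝ) ≤ -(m:ℝ) := by exact_mod_cast neg_le_neg (by exact_mod_cast hmn)
          linarith
        · exact ⟨0, measure_ne_top _ _⟩
      have hempty : (⋂ n : ℕ, {ω | Z' ω ≤ -(n:ℝ)}) = ∅ := by
        ext ω
        simp only [Set.mem_iInter, Set.mem_setOf_eq, Set.mem_empty_iff_false, iff_false,
          not_forall]
        obtain ⟨n, hn⟩ := exists_nat_gt (-(Z' ω))
        exact ⟨n, by push_neg; linarith⟩
      rw [hempty, measure_empty] at htend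
      have hspos : (0:ℝ) < s := hs.1
      have : ∀ᶠ n : ℕ in Filter.atTop, μ {ω | Z' ω ≤ -(n:ℝ)} < ENNReal.ofReal s := by
        apply htend.eventually_lt_const
        simpa using hspos
      obtain ⟨n, hn⟩ := this.exists
      refine ⟨-(n:ℝ), fun z hz => ?_⟩
      by_contra hzn
      push_neg at hzn
      have h1 : μ {ω | Z ω ≤ z} ≤ μ {ω | Z' ω ≤ -(n:ℝ)} := by
        rw [hFeq]
        exact measure_mono fun ω hω => le_trans hω hzn.le
      have h2 : (μ {ω | Z ω ≤ z}).toReal < s := by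
        have := lt_of_le_of_lt h1 hn
        exact ENNReal.toReal_lt_of_lt_ofReal this
      exact absurd hz (not_le.2 h2)
    -- nonempty
    have hne : {z : ℝ | t ≤ (μ {ω | Z ω ≤ z}).toReal}.Nonempty := by
      have htend : Filter.Tendsto (fun n : ℕ => μ {ω | Z' ω ≤ (n:ℝ)})
          Filter.atTop (nhds (μ (⋃ n : ℕ, {ω | Z' ω ≤ (n:ℝ)}))) := by
        apply tendsto_measure_iUnion_atTop
        intro m n hmn ω hω
        simp only [Set.mem_setOf_eq] at hω ⊢
        exact le_trans hω (by exact_mod_cast hmn)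
      have huniv : (⋃ n : ℕ, {ω | Z' ω ≤ (n:ℝ)}) = Set.univ := by
        ext ω
        simp only [Set.mem_iUnion, Set.mem_setOf_eq, Set.mem_univ, iff_true]
        obtain ⟨n, hn⟩ := exists_nat_ge (Z' ω)
        exact ⟨n, hn⟩
      rw [huniv, measure_univ] at htend
      have : ∀ᶠ n : ℕ in Filter.atTop, ENNReal.ofReal t < μ {ω | Z' ω ≤ (n:ℝ)} := by
        apply htend.eventually_const_lt
        exact ENNReal.ofReal_lt_one.2 ht.2
      obtain ⟨n, hn⟩ := this.exists
      refine ⟨(n:ℝ), ?_⟩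
      show t ≤ (μ {ω | Z ω ≤ (n:ℝ)}).toReal
      rw [hFeq]
      exact (ENNReal.ofReal_le_iff_le_toReal (measure_ne_top _ _)).1 hn.le
    exact csInf_le_csInf hbdd hne hsub
  have hgm : AEMeasurable g (volume.restrict (Set.Ioo (0:ℝ) 1)) :=
    aemeasurable_restrict_of_monotoneOn measurableSet_Ioo hmono
  set ν : Measure ℝ := h.measure.restrict (Set.Ioo (0:ℝ) 1) with hν_def
  haveI : IsFiniteMeasure ν := by
    constructor
    rw [hν_def, Measure.restrict_apply_univ, StieltjesFunction.measure_Ioo]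
    exact ENNReal.ofReal_lt_top
  set w : Measure ℝ := volume.restrict (Set.Ioo (0:ℝ) 1) with hw_def
  -- the two-variable function
  set f : ℝ × ℝ → ℝ := fun p => if p.1 < p.2 then g p.2 else 0 with hf_def
  have hfm : AEStronglyMeasurable f (ν.prod w) := by
    have h1 : AEMeasurable (fun p : ℝ × ℝ => g p.2) (ν.prod w) := hgm.comp_snd
    have h2 : MeasurableSet {p : ℝ × ℝ | p.1 < p.2} :=
      measurableSet_lt measurable_fst measurable_snd
    have : f = Set.indicator {p : ℝ × ℝ | p.1 < p.2} (fun p => g p.2) := by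
      funext p
      simp [hf_def, Set.indicator_apply, Set.mem_setOf_eq]
    rw [this]
    exact (h1.indicator h2).aestronglyMeasurable
  -- left limit facts
  have h_ll_nonneg : ∀ u ∈ Set.Ioo (0:ℝ) 1, 0 ≤ Function.leftLim h u := by
    intro u hu
    have := h.mono.le_leftLim hu.1
    rwa [h_zero] at this
  have h_ll_eq : ∀ᵐ u ∂w, Function.leftLim h u = h u := by
    have hc : {x : ℝ | ¬ContinuousAt h x}.Countable := h.mono.countable_not_continuousAt
    have hnull : volume {x : ℝ | ¬ContinuousAt h x} = 0 := hc.measure_zero _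
    rw [hw_def]
    apply ae_restrict_of_ae
    rw [MeasureTheory.ae_iff]
    refine measure_mono_null (fun x hx => ?_) hnull
    simp only [Set.mem_setOf_eq] at hx ⊢
    intro hcont
    exact hx (h.mono.continuousWithinAt_Iio_iff_leftLim_eq.1 hcont.continuousWithinAt)
  -- value of ν (Iio u)
  have hνIio : ∀ u ∈ Set.Ioo (0:ℝ) 1, (ν (Set.Iio u)).toReal = Function.leftLim h u := by
    intro u hu
    have hset : Set.Iio u ∩ Set.Ioo (0:ℝ) 1 = Set.Ioo 0 u := by
      ext x
      simp only [Set.mem_inter_iff, Set.mem_Iio, Set.mem_Ioo]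
      constructor
      · rintro ⟨h1, h2, h3⟩; exact ⟨h2, h1⟩
      · rintro ⟨h1, h2⟩; exact ⟨h2, h1, lt_trans h2 hu.2⟩
    rw [hν_def, Measure.restrict_apply measurableSet_Iio, hset,
      StieltjesFunction.measure_Ioo, h_zero, sub_zero,
      ENNReal.toReal_ofReal (h_ll_nonneg u hu)]
  -- inner integral in s
  have hinner : ∀ u : ℝ, (fun s => f (s, u)) = Set.indicator (Set.Iio u) (fun _ => g u) := by
    intro u
    funext s
    simp [hf_def, Set.indicator_apply, Set.mem_Iio]
  have hinner_int : ∀ u ∈ Set.Ioo (0:ℝ) 1,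
      ∫ s, f (s, u) ∂ν = g u * Function.leftLim h u := by
    intro u hu
    rw [hinner u, integral_indicator_const _ measurableSet_Iio, smul_eq_mul,
      measureReal_def, hνIio u hu, mul_comm]
  -- joint integrability
  have hint : Integrable f (ν.prod w) := by
    rw [integrable_prod_iff' hfm]
    constructor
    · filter_upwards with u
      rw [hinner u]
      exact (integrable_const _).indicator measurableSet_Iio
    · have heq : ∀ᵐ u ∂w, ∫ s, ‖f (s, u)‖ ∂ν = ‖g u * h u‖ := by
        filter_upwards [ae_restrict_mem measurableSet_Ioo, h_ll_eq] with u hu hll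
        have : (fun s => ‖f (s, u)‖) = Set.indicator (Set.Iio u) (fun _ => ‖g u‖) := by
          funext s
          simp [hf_def, Set.indicator_apply, Set.mem_Iio, apply_ite norm]
        rw [this, integral_indicator_const _ measurableSet_Iio, smul_eq_mul, measureReal_def, hνIio u hu, hll,
          norm_mul, Real.norm_of_nonneg (h_nonneg u ⟨hu.1.le, hu.2.le⟩), mul_comm]
      exact h_int.norm.congr (heq.mono fun u hu => hu.symm)
  -- Fubini swap
  have hswap : ∫ s, ∫ u, f (s, u) ∂w ∂ν = ∫ u, ∫ s, f (s, u) ∂ν ∂w :=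
    integral_integral_swap (f := fun s u => f (s, u)) hint
  -- LHS equals swapped iterated integral
  have hLHS : ∫ s in Set.Ioo (0:ℝ) 1, g s * h s = ∫ u, ∫ s, f (s, u) ∂ν ∂w := by
    apply integral_congr_ae
    filter_upwards [ae_restrict_mem measurableSet_Ioo, h_ll_eq] with u hu hll
    rw [hinner_int u hu, hll]
  -- RHS equals first iterated integral
  have hRHS : ∫ s in Set.Ioo (0:ℝ) 1, (1 - s) * ES μ Z s ∂h.measure
      = ∫ s, ∫ u, f (s, u) ∂w ∂ν := by
    apply integral_congr_ae
    filter_upwards [ae_restrict_mem measurableSet_Ioo] with s hs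
    have h1 : (1 - s) * ES μ Z s = ∫ u in Set.Ioc s 1, g u := by
      rw [ES, ← mul_assoc, mul_inv_cancel₀ (by linarith [hs.2] : (1:ℝ) - s ≠ 0), one_mul]
    have h2 : ∫ u in Set.Ioc s 1, g u = ∫ u in Set.Ioo s 1, g u :=
      integral_Ioc_eq_integral_Ioo
    have h3 : ∫ u, f (s, u) ∂w = ∫ u in Set.Ioo s 1, g u := by
      have hind : ∀ᵐ u ∂w, f (s, u) = Set.indicator (Set.Ioo s 1) g u := by
        filter_upwards [ae_restrict_mem measurableSet_Ioo] with u hu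
        simp only [hf_def, Set.indicator_apply, Set.mem_Ioo]
        by_cases hsu : s < u
        · simp [hsu, hu.2]
        · simp [hsu]
      rw [integral_congr_ae hind, integral_indicator measurableSet_Ioo, hw_def,
        Measure.restrict_restrict measurableSet_Ioo,
        Set.inter_eq_left.2 (Set.Ioo_subset_Ioo hs.1.le le_rfl)]
    rw [h1, h2, ← h3]
  rw [hRHS, hswap, ← hLHS]
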